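/- Let X be a metric space and G a group of isometries of X. Let C ⊆ X be a compact set such that no point of C has a totally bounded G-orbit. Then there is ε > 0 such that for every ε-bounded set D ⊆ X there exists g ∈ G with d(g·C, D) ≥ ε. -/
import Mathlib


/-- `S` is `ε`-bounded if it is covered by finitely many open `ε`-balls. -/
def EBounded {X : Type*} [MetricSpace X] (S : Set X) (ε : ℝ) : Prop :=
  ∃ F : Finset X, S ⊆ ⋃ x ∈ F, Metric.ball x ε

open Metric MulAction

private lemma neumann_cover {X G : Type*} [MetricSpace X] [DecidableEq X] [Group G] [MulAction G X]
    (hiso : ∀ (g : G) (x y : X), dist (g • x) (g • y) = dist x y) (ρ : ℝ) :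
    ∀ (n : ℕ) (L : Finset (G × X)), (L.image Prod.snd).card ≤ n →
    (∀ g : G, ∃ p ∈ L, dist (g • p.2) (p.1 • p.2) < ρ) →
    ∃ a ∈ L.image Prod.snd, ∃ E : Finset G, ∀ g : G, ∃ e ∈ E,
      dist (g • a) (e • a) < 2 * ρ := by
  classical
  intro n
  induction n with
  | zero =>
    intro L hcard hcov
    obtain ⟨p, hp, -⟩ := hcov 1
    have h1 : p.2 ∈ L.image Prod.snd := Finset.mem_image_of_mem _ hp
    have h2 := Finset.card_pos.mpr ⟨_, h1⟩
    omega
  | succ n ih =>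
    intro L hcard hcov
    obtain ⟨p0, hp0, -⟩ := hcov 1
    set a : X := p0.2 with ha
    have haimg : a ∈ L.image Prod.snd := Finset.mem_image_of_mem _ hp0
    by_cases h1 : ∃ E : Finset G, ∀ g : G, ∃ e ∈ E, dist (g • a) (e • a) < 2 * ρ
    · exact ⟨a, haimg, h1⟩
    push_neg at h1
    obtain ⟨g0, hg0⟩ := h1 ((L.filter (fun p => p.2 = a)).image Prod.fst)
    -- hg0 : ∀ e ∈ ..., 2 * ρ ≤ dist (g0 • a) (e • a)
    have hg0' : ∀ q ∈ L, q.2 = a → 2 * ρ ≤ dist (g0 • a) (q.1 • a) := by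
      intro q hq hqa
      exact hg0 q.1 (Finset.mem_image_of_mem _ (Finset.mem_filter.mpr ⟨hq, hqa⟩))
    set L₁ : Finset (G × X) := L.filter (fun p => p.2 ≠ a) with hL₁
    set L₂ : Finset (G × X) := L.filter (fun p => p.2 = a) with hL₂
    set L' : Finset (G × X) :=
      L₁ ∪ (L₂ ×ˢ L₁).image (fun q => (q.1.1 * g0⁻¹ * q.2.1, q.2.2)) with hL'
    have hsnd : ∀ u ∈ L', u.2 ∈ L₁.image Prod.snd := by
      intro u hu
      rcases Finset.mem_union.mp hu with h | h
      · exact Finset.mem_image_of_mem _ h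
      · obtain ⟨q, hq, rfl⟩ := Finset.mem_image.mp h
        exact Finset.mem_image.mpr ⟨q.2, (Finset.mem_product.mp hq).2, rfl⟩
    have hsub : L'.image Prod.snd ⊆ (L.image Prod.snd).erase a := by
      intro b hb
      obtain ⟨u, hu, rfl⟩ := Finset.mem_image.mp hb
      obtain ⟨v, hv, hv2⟩ := Finset.mem_image.mp (hsnd u hu)
      have hvL := Finset.mem_filter.mp hv
      refine Finset.mem_erase.mpr ⟨?_, ?_⟩
      · rw [← hv2]; exact hvL.2
      · rw [← hv2]; exact Finset.mem_image_of_mem _ hvL.1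
    have hcard' : (L'.image Prod.snd).card ≤ n := by
      have := Finset.card_le_card hsub
      rw [Finset.card_erase_of_mem haimg] at this
      omega
    have hcov' : ∀ g : G, ∃ p ∈ L', dist (g • p.2) (p.1 • p.2) < ρ := by
      intro g
      obtain ⟨p, hp, hd⟩ := hcov g
      by_cases hpa : p.2 = a
      · rw [hpa] at hd
        obtain ⟨q, hq, hdq⟩ := hcov (g0 * p.1⁻¹ * g)
        by_cases hqa : q.2 = a
        · exfalso
          rw [hqa] at hdq
          have key : dist (g0 • a) (q.1 • a) < 2 * ρ := by
            have e1 : dist ((g0 * p.1⁻¹ * g) • a) (g0 • a) < ρ := by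
              have := hiso (g0 * p.1⁻¹) (g • a) (p.1 • a)
              rw [smul_smul, smul_smul] at this
              have h2 : g0 * p.1⁻¹ * p.1 = g0 := by group
              rw [h2] at this
              rw [this]; exact hd
            calc dist (g0 • a) (q.1 • a)
                ≤ dist (g0 • a) ((g0 * p.1⁻¹ * g) • a)
                  + dist ((g0 * p.1⁻¹ * g) • a) (q.1 • a) := dist_triangle _ _ _
              _ < ρ + ρ := by
                  rw [dist_comm] at e1
                  exact add_lt_add e1 hdq
              _ = 2 * ρ := by ring
          exact absurd (hg0' q hq hqa) (not_le.mpr key)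
        · refine ⟨(p.1 * g0⁻¹ * q.1, q.2), ?_, ?_⟩
          · apply Finset.mem_union_right
            exact Finset.mem_image.mpr ⟨(p, q), Finset.mem_product.mpr
              ⟨Finset.mem_filter.mpr ⟨hp, hpa⟩, Finset.mem_filter.mpr ⟨hq, hqa⟩⟩, rfl⟩
          · show dist (g • q.2) ((p.1 * g0⁻¹ * q.1) • q.2) < ρ
            have := hiso (g0 * p.1⁻¹) (g • q.2) ((p.1 * g0⁻¹ * q.1) • q.2)
            rw [smul_smul, smul_smul] at this
            have h2 : g0 * p.1⁻¹ * (p.1 * g0⁻¹ * q.1) = q.1 := by group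
            rw [h2] at this
            rw [← this]
            exact hdq
      · exact ⟨p, Finset.mem_union_left _ (Finset.mem_filter.mpr ⟨hp, hpa⟩), hd⟩
    obtain ⟨b, hb, E, hE⟩ := ih L' hcard' hcov'
    exact ⟨b, Finset.mem_of_mem_erase (hsub hb), E, hE⟩

/-- Lemma 3.2: if `G` acts on `X` by isometries and `C ⊆ X` is compact with no point
of `C` having a totally bounded orbit, then there is `ε > 0` such that every
`ε`-bounded set `D` can be uniformly separated from some translate of `C`. -/
theorem metric_pm_neumann_compact {X G : Type*} [MetricSpace X] [Group G] [MulAction G X]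
    (hiso : ∀ (g : G) (x y : X), dist (g • x) (g • y) = dist x y)
    (C : Set X) (hC : IsCompact C)
    (horb : ∀ a ∈ C, ¬ TotallyBounded (MulAction.orbit G a)) :
    ∃ ε > (0 : ℝ), ∀ D : Set X, EBounded D ε →
      ∃ g : G, ∀ c ∈ C, ∀ d ∈ D, ε ≤ dist (g • c) d := by
  classical
  rcases Set.eq_empty_or_nonempty C with hCe | hCne
  · exact ⟨1, one_pos, fun D _ =>
      ⟨1, fun c hc => (Set.notMem_empty c (hCe ▸ hc)).elim⟩⟩
  -- every point has a scale at which its orbit is not boundedly netted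
  have horb' : ∀ a ∈ C, ∃ δ > 0, ∀ t : Set X, t.Finite →
      ¬ MulAction.orbit G a ⊆ ⋃ y ∈ t, ball y δ := by
    intro a ha
    have h := horb a ha
    rw [Metric.totallyBounded_iff] at h
    push_neg at h
    obtain ⟨δ, hδpos, hδ⟩ := h
    exact ⟨δ, hδpos, fun t ht hsub => (hδ t ht hsub).elim⟩
  choose! δ hδpos hδ using horb'
  -- uniform scale ε₀ on C
  obtain ⟨t, htC, htcov⟩ := hC.elim_nhds_subcover (fun a => ball a (δ a / 2))
    (fun a ha => ball_mem_nhds a (by have := hδpos a ha; linarith))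
  have htne : t.Nonempty := by
    obtain ⟨a0, ha0⟩ := hCne
    obtain ⟨i, hi⟩ := Set.mem_iUnion.mp (htcov ha0)
    obtain ⟨hi', -⟩ := Set.mem_iUnion.mp hi
    exact ⟨i, hi'⟩
  set ε0 : ℝ := t.inf' htne (fun a => δ a / 2) with hε0
  have hε0pos : 0 < ε0 := by
    rw [hε0, Finset.lt_inf'_iff]
    intro i hi
    have := hδpos i (htC i hi)
    linarith
  -- no orbit of a point of C is ε₀-netted by a finite set
  have claim : ∀ a ∈ C, ∀ s : Set X, s.Finite →
      ¬ MulAction.orbit G a ⊆ ⋃ y ∈ s, ball y ε0 := by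
    intro a ha s hs hsub
    obtain ⟨i, hi⟩ := Set.mem_iUnion.mp (htcov ha)
    obtain ⟨hit, hai⟩ := Set.mem_iUnion.mp hi
    refine hδ i (htC i hit) s hs ?_
    intro z hz
    obtain ⟨g, rfl⟩ := MulAction.mem_orbit_iff.mp hz
    have hga : g • a ∈ ⋃ y ∈ s, ball y ε0 := hsub (MulAction.mem_orbit a g)
    obtain ⟨y, hy⟩ := Set.mem_iUnion.mp hga
    obtain ⟨hys, hby⟩ := Set.mem_iUnion.mp hy
    have hd1 : dist (g • i) (g • a) < δ i / 2 := by
      rw [hiso]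
      rw [mem_ball, dist_comm] at hai
      exact hai
    have hd2 : dist (g • a) y < ε0 := mem_ball.mp hby
    have hle : ε0 ≤ δ i / 2 := by
      rw [hε0]; exact Finset.inf'_le _ hit
    refine Set.mem_iUnion.mpr ⟨y, Set.mem_iUnion.mpr ⟨hys, ?_⟩⟩
    rw [mem_ball]
    calc dist (g • i) y ≤ dist (g • i) (g • a) + dist (g • a) y := dist_triangle _ _ _
      _ < δ i / 2 + ε0 := add_lt_add hd1 hd2
      _ ≤ δ i := by linarith
  -- the main argument, by contradiction
  by_contra hcon
  push_neg at hcon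
  set ε : ℝ := ε0 / 16 with hε
  have hεpos : 0 < ε := by rw [hε]; linarith
  obtain ⟨D, hD, hDnear⟩ := hcon ε hεpos
  obtain ⟨F, hF⟩ := hD
  -- every translate of C comes 2ε-close to F
  have hcatch : ∀ g : G, ∃ c ∈ C, ∃ x ∈ F, dist (g • c) x < 2 * ε := by
    intro g
    obtain ⟨c, hc, d, hd, hdist⟩ := hDnear g
    obtain ⟨x, hx⟩ := Set.mem_iUnion.mp (hF hd)
    obtain ⟨hxF, hdx⟩ := Set.mem_iUnion.mp hx
    refine ⟨c, hc, x, hxF, ?_⟩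
    calc dist (g • c) x ≤ dist (g • c) d + dist d x := dist_triangle _ _ _
      _ < ε + ε := add_lt_add hdist (mem_ball.mp hdx)
      _ = 2 * ε := by ring
  -- cover C by 2ε-balls centered in C
  obtain ⟨t2, ht2C, ht2cov⟩ := hC.elim_nhds_subcover (fun a => ball a (2 * ε))
    (fun a _ => ball_mem_nhds a (by linarith))
  have hcatch2 : ∀ g : G, ∃ j ∈ t2, ∃ x ∈ F, dist (g • j) x < 4 * ε := by
    intro g
    obtain ⟨c, hc, x, hxF, hdist⟩ := hcatch g
    obtain ⟨j, hj⟩ := Set.mem_iUnion.mp (ht2cov hc)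
    obtain ⟨hjt, hcj⟩ := Set.mem_iUnion.mp hj
    refine ⟨j, hjt, x, hxF, ?_⟩
    have : dist (g • j) (g • c) < 2 * ε := by
      rw [hiso]; rw [mem_ball, dist_comm] at hcj; exact hcj
    calc dist (g • j) x ≤ dist (g • j) (g • c) + dist (g • c) x := dist_triangle _ _ _
      _ < 2 * ε + 2 * ε := add_lt_add this hdist
      _ = 4 * ε := by ring
  -- select representatives
  have hselx : ∀ q : X × X, ∃ h : G,
      (∃ h' : G, dist (h' • q.1) q.2 < 4 * ε) → dist (h • q.1) q.2 < 4 * ε := by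
    intro q
    by_cases hq : ∃ h' : G, dist (h' • q.1) q.2 < 4 * ε
    · obtain ⟨h', hh'⟩ := hq; exact ⟨h', fun _ => hh'⟩
    · exact ⟨1, fun h => absurd h hq⟩
  choose sel hsel using hselx
  set L : Finset (G × X) := (t2 ×ˢ F).image (fun q => (sel q, q.1)) with hL
  have hcov : ∀ g : G, ∃ p ∈ L, dist (g • p.2) (p.1 • p.2) < 8 * ε := by
    intro g
    obtain ⟨j, hjt, x, hxF, hdist⟩ := hcatch2 g
    have hmem : ((j, x) : X × X) ∈ t2 ×ˢ F := Finset.mem_product.mpr ⟨hjt, hxF⟩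
    refine ⟨(sel (j, x), j), Finset.mem_image_of_mem _ hmem, ?_⟩
    have hs : dist (sel (j, x) • j, x).1 (j, x).2 < 4 * ε := by
      exact hsel (j, x) ⟨g, hdist⟩
    show dist (g • j) (sel (j, x) • j) < 8 * ε
    calc dist (g • j) (sel (j, x) • j)
        ≤ dist (g • j) x + dist x (sel (j, x) • j) := dist_triangle _ _ _
      _ < 4 * ε + 4 * ε := by
          refine add_lt_add hdist ?_
          rw [dist_comm]
          exact hsel (j, x) ⟨g, hdist⟩
      _ = 8 * ε := by ring
  obtain ⟨b, hb, E, hE⟩ := neumann_cover hiso (8 * ε) (L.image Prod.snd).card L le_rfl hcov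
  -- b ∈ C
  have hbC : b ∈ C := by
    obtain ⟨u, hu, hub⟩ := Finset.mem_image.mp hb
    obtain ⟨q, hq, hqu⟩ := Finset.mem_image.mp hu
    have h2 : u.2 = q.1 := by rw [← hqu]
    rw [← hub, h2]
    exact ht2C q.1 (Finset.mem_product.mp hq).1
  -- contradiction: orbit of b has a finite ε₀-net
  refine claim b hbC (↑(E.image (fun e => e • b))) (Finset.finite_toSet _) ?_
  intro z hz
  obtain ⟨g, rfl⟩ := MulAction.mem_orbit_iff.mp hz
  obtain ⟨e, heE, hde⟩ := hE g
  refine Set.mem_iUnion.mpr ⟨e • b, Set.mem_iUnion.mpr ⟨?_, ?_⟩⟩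
  · exact Finset.mem_coe.mpr (Finset.mem_image_of_mem _ heE)
  · rw [mem_ball]
    have : 2 * (8 * ε) = ε0 := by rw [hε]; ring
    rw [← this]
    exact hde
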